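/- For λ ∈ ℂ*, let T(λ) be the 2-dimensional representation of C₂ * C₃ with u ↦ [[0,λ],[λ⁻¹,0]] and v ↦ diag(1, ω) where ω is a primitive cube root of unity. Then T(λ) is well-defined (u² = I, v³ = I) and irreducible. -/

import Mathlib

/-- The relations of `C₂ * C₃ = ⟨u, v | u² = v³ = e⟩`. -/
def C23Rels : Set (FreeGroup (Fin 2)) :=
  {FreeGroup.of 0 ^ 2, FreeGroup.of 1 ^ 3}

/-- The free product `C₂ * C₃` as a presented group. -/
abbrev C2C3 : Type := PresentedGroup C23Rels

/-- The generator `u` (of order 2) of `C₂ * C₃`. -/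
def genU : C2C3 := PresentedGroup.of 0

/-- The generator `v` (of order 3) of `C₂ * C₃`. -/
def genV : C2C3 := PresentedGroup.of 1

open Matrix

private lemma span_top (W : Submodule ℂ (Fin 2 → ℂ)) (h0 : ![(1:ℂ),0] ∈ W)
    (h1 : ![(0:ℂ),1] ∈ W) : W = ⊤ := by
  rw [eq_top_iff]
  intro y _
  have : y = y 0 • ![(1:ℂ),0] + y 1 • ![(0:ℂ),1] := by
    funext i; fin_cases i <;> simp
  rw [this]
  exact W.add_mem (W.smul_mem _ h0) (W.smul_mem _ h1)

/-- For `λ ∈ ℂ*`, the assignment `u ↦ [[0,λ],[λ⁻¹,0]]`, `v ↦ diag(1,ω)` (`ω` a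
primitive cube root of unity) gives a well-defined (`u² = 1`, `v³ = 1`)
irreducible 2-dimensional representation `T(λ)` of `C₂ * C₃`. -/
theorem stmt15 (l : ℂ) (hl : l ≠ 0) (ω : ℂ) (hω : IsPrimitiveRoot ω 3) :
    (!![0, l; l⁻¹, 0] : Matrix (Fin 2) (Fin 2) ℂ) ^ 2 = 1 ∧
    (!![1, 0; 0, ω] : Matrix (Fin 2) (Fin 2) ℂ) ^ 3 = 1 ∧
    ∀ W : Submodule ℂ (Fin 2 → ℂ),
      (∀ x ∈ W, (!![0, l; l⁻¹, 0] : Matrix (Fin 2) (Fin 2) ℂ).mulVec x ∈ W) →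
      (∀ x ∈ W, (!![1, 0; 0, ω] : Matrix (Fin 2) (Fin 2) ℂ).mulVec x ∈ W) →
      W = ⊥ ∨ W = ⊤ := by
  have hU : ∀ x : Fin 2 → ℂ,
      (!![0, l; l⁻¹, 0] : Matrix (Fin 2) (Fin 2) ℂ).mulVec x = ![l * x 1, l⁻¹ * x 0] := by
    intro x; funext i
    fin_cases i <;> simp [Matrix.mulVec, dotProduct, Fin.sum_univ_two]
  have hV : ∀ x : Fin 2 → ℂ,
      (!![1, 0; 0, ω] : Matrix (Fin 2) (Fin 2) ℂ).mulVec x = ![x 0, ω * x 1] := by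
    intro x; funext i
    fin_cases i <;> simp [Matrix.mulVec, dotProduct, Fin.sum_univ_two]
  refine ⟨?_, ?_, ?_⟩
  · rw [pow_two, Matrix.mul_fin_two, Matrix.one_fin_two]
    norm_num [inv_mul_cancel₀ hl, mul_inv_cancel₀ hl]
  · have h3 : ω * ω * ω = 1 := by linear_combination hω.pow_eq_one
    rw [pow_succ, pow_two, Matrix.mul_fin_two, Matrix.mul_fin_two, Matrix.one_fin_two]
    norm_num [h3]
  · intro W hWu hWv
    by_cases hW : W = ⊥
    · exact Or.inl hW
    right
    obtain ⟨x, hxW, hx0⟩ := Submodule.exists_mem_ne_zero_of_ne_bot hW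
    -- key: from any nonzero vector, get both basis vectors
    have key : ∀ y : Fin 2 → ℂ, y ∈ W → y 1 ≠ 0 → ![(0:ℂ),1] ∈ W := by
      intro y hyW hy1
      have : (y 1)⁻¹ • ![(0:ℂ), y 1] = ![(0:ℂ),1] := by
        funext i; fin_cases i <;> simp [inv_mul_cancel₀ hy1]
      by_cases hy0 : y 0 = 0
      · have hy : y = ![(0:ℂ), y 1] := by
          funext i; fin_cases i <;> simp [hy0]
        rw [← this, ← hy]
        exact W.smul_mem _ hyW
      · -- use v-invariance: V y - y = ![0, (ω-1) y 1]
        have hVy := hWv y hyW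
        rw [hV] at hVy
        have hz : ![y 0, ω * y 1] - y ∈ W := W.sub_mem hVy hyW
        have hzeq : ![y 0, ω * y 1] - y = ![(0:ℂ), (ω - 1) * y 1] := by
          funext i; fin_cases i <;> simp <;> ring
        rw [hzeq] at hz
        have hω1 : ω - 1 ≠ 0 := sub_ne_zero.mpr (hω.ne_one (by norm_num))
        have hne : (ω - 1) * y 1 ≠ 0 := mul_ne_zero hω1 hy1
        have heq : ((ω - 1) * y 1)⁻¹ • ![(0:ℂ), (ω - 1) * y 1] = ![(0:ℂ),1] := by
          funext i; fin_cases i <;> simp <;> field_simp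
        rw [← heq]
        exact W.smul_mem _ hz
    -- get e1 ∈ W
    have he1 : ![(0:ℂ),1] ∈ W := by
      by_cases hx1 : x 1 = 0
      · -- then x 0 ≠ 0; apply U: U x = ![l * x 1, l⁻¹ * x 0] has second coord ≠ 0
        have hx0' : x 0 ≠ 0 := by
          intro h; apply hx0; funext i; fin_cases i <;> simp [h, hx1]
        have hUx := hWu x hxW
        rw [hU] at hUx
        refine key _ hUx ?_
        simp [mul_ne_zero (inv_ne_zero hl) hx0']
      · exact key x hxW hx1
    -- get e0 ∈ W : U e1 = ![l, 0]
    have he0 : ![(1:ℂ),0] ∈ W := by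
      have hUe := hWu _ he1
      rw [hU] at hUe
      have : l⁻¹ • ![l * (![(0:ℂ),1] 1), l⁻¹ * (![(0:ℂ),1] 0)] = ![(1:ℂ),0] := by
        funext i; fin_cases i <;> simp [inv_mul_cancel₀ hl]
      rw [← this]
      exact W.smul_mem _ hUe
    exact span_top W he0 he1
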